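/- Suppose C is Hom-finite. Let U →u V →v W →h U[1] be a distinguished triangle in C that is left almost split, with h ≠ 0 and U indecomposable having local endomorphism ring, and suppose U is not isomorphic to U[1]. Let d = dim_k End(U)/Rad End(U), where Rad End(U) denotes the set of non-invertible endomorphisms of U (a two-sided ideal of the local ring End(U)). Then dim_k End(U) + dim_k Hom(W,U) = dim_k Hom(V,U) + d. -/

import Mathlib

open CategoryTheory Category Limits Pretriangulated

universe v u

/-- In a local ring, idempotents are trivial. -/
lemma aux_idem_eq_zero_or_one {S : Type*} [Ring S] [IsLocalRing S]
    (e : S) (he : e * e = e) : e = 0 ∨ e = 1 := by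
  have hsum : e + (1 - e) = 1 := by abel
  rcases IsLocalRing.isUnit_or_isUnit_of_add_one hsum with hu | hu
  · right
    exact hu.mul_left_cancel (by rw [he, mul_one])
  · left
    have h0 : (1 - e) * e = (1 - e) * 0 := by
      rw [sub_mul, one_mul, he, sub_self, mul_zero]
    exact hu.mul_left_cancel h0

/-- In a local endomorphism ring, a split mono endomorphism is an isomorphism. -/
lemma aux_isIso_of_isSplitMono {C : Type u} [Category.{v} C] [Preadditive C] {U : C}
    (hUloc : IsLocalRing (End U)) (f : U ⟶ U) (hf : IsSplitMono f) : IsIso f := by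
  obtain ⟨r, hr⟩ := hf
  rw [← isUnit_iff_isIso]
  set f' : End U := f with hf'
  set r' : End U := r with hr'def
  have hr' : r' * f' = 1 := hr
  have hee : (f' * r') * (f' * r') = f' * r' := by
    rw [mul_assoc, ← mul_assoc r' f', hr', one_mul]
  rcases aux_idem_eq_zero_or_one _ hee with h0 | h1
  · exfalso
    have hf0 : f' = 0 := by
      calc f' = f' * (r' * f') := by rw [hr', mul_one]
        _ = (f' * r') * f' := by rw [mul_assoc]
        _ = 0 := by rw [h0, zero_mul]
    have : (1 : End U) = 0 := by rw [← hr', hf0, mul_zero]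
    exact one_ne_zero this
  · exact ⟨⟨f', r', h1, hr'⟩, rfl⟩

/-- Suppose the `k`-linear pretriangulated category `C` is Hom-finite.
Let `U ⟶ V ⟶ W ⟶ U⟦1⟧` be a distinguished triangle that is left almost split, with
`h ≠ 0` and `U` indecomposable with local endomorphism ring, and suppose `U ≇ U⟦1⟧`.
Let `R` be the radical of `End U` (the non-invertible endomorphisms of `U`) and
`d = dim (End U)/R`. Then `dim End(U) + dim Hom(W,U) = dim Hom(V,U) + d`. -/
theorem dim_hom_defect_left_almost_split_of_not_iso_shift
    (k : Type*) [Field k] {C : Type u} [Category.{v} C] [Preadditive C] [Linear k C]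
    [HasZeroObject C] [HasShift C ℤ] [∀ n : ℤ, (shiftFunctor C n).Additive]
    [Pretriangulated C] [HasBinaryBiproducts C]
    [∀ X Y : C, FiniteDimensional k (X ⟶ Y)]
    {U V W : C} (u : U ⟶ V) (v : V ⟶ W) (h : W ⟶ U⟦(1 : ℤ)⟧)
    (hdist : Triangle.mk u v h ∈ distTriang C)
    (hlas : ∀ (X : C) (g : U ⟶ X), ¬ IsSplitMono g → ∃ t : V ⟶ X, u ≫ t = g)
    (hne : h ≠ 0) (hU : Indecomposable U) (hUloc : IsLocalRing (End U))
    (hshift : ¬ Nonempty (U ≅ U⟦(1 : ℤ)⟧))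
    (R : Submodule k (U ⟶ U)) (hR : (R : Set (U ⟶ U)) = {f : U ⟶ U | ¬ IsIso f}) :
    Module.finrank k (U ⟶ U) + Module.finrank k (W ⟶ U) =
      Module.finrank k (V ⟶ U) + Module.finrank k ((U ⟶ U) ⧸ R) := by
  have hmemR : ∀ f : U ⟶ U, f ∈ R ↔ ¬ IsIso f := by
    intro f
    constructor
    · intro hf
      have : f ∈ (R : Set (U ⟶ U)) := hf
      rwa [hR] at this
    · intro hf
      show f ∈ (R : Set (U ⟶ U))
      rw [hR]; exact hf
  set E := shiftEquiv C (1 : ℤ) with hE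
  -- Key step A :  h ≫ g = 0  for every g : U⟦1⟧ ⟶ U.
  have keyA : ∀ g : U⟦(1 : ℤ)⟧ ⟶ U, h ≫ g = 0 := by
    intro g
    set ψ : U ⟶ E.inverse.obj U := E.unit.app U ≫ E.inverse.map g with hψdef
    have hg : E.functor.map ψ ≫ E.counit.app U = g := by
      simp [hψdef]
      exact (congrArg (E.functor.map (E.unit.app U) ≫ ·) (E.counit.naturality g)).trans
        ((Category.assoc _ _ _).symm.trans
          ((congrArg (· ≫ (𝟭 C).map g) (E.functor_unit_comp U)).trans (id_comp _)))
    have hψ : ¬ IsSplitMono ψ := by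
      intro hsm
      obtain ⟨r, hr⟩ := hsm
      set e : E.inverse.obj U ⟶ E.inverse.obj U := r ≫ ψ with hedef
      have hee : e ≫ e = e := by
        rw [hedef, assoc, ← assoc ψ r ψ, hr, id_comp]
      set e₀ : U ⟶ U := E.inverse.preimage e with he₀def
      have hmape : E.inverse.map e₀ = e := E.inverse.map_preimage e
      set e₁ : End U := e₀ with he₁def
      have he₁ : e₁ * e₁ = e₁ := by
        apply E.inverse.map_injective
        show E.inverse.map (e₀ ≫ e₀) = E.inverse.map e₀
        rw [Functor.map_comp, hmape, hee]
      rcases aux_idem_eq_zero_or_one _ he₁ with h0 | h1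
      · -- e = 0 forces 𝟙 U = 0, contradicting nontriviality
        have he0 : e = 0 := by
          rw [← hmape]
          show E.inverse.map e₀ = 0
          have h0' : e₀ = (0 : U ⟶ U) := h0
          rw [h0', Functor.map_zero]
        have hψ0 : ψ = 0 := by
          calc ψ = (ψ ≫ r) ≫ ψ := by rw [hr, id_comp]
            _ = ψ ≫ e := by rw [assoc, hedef]
            _ = 0 := by rw [he0, comp_zero]
        have : 𝟙 U = 0 := by rw [← hr, hψ0, zero_comp]
        have h10 : (1 : End U) = 0 := this
        exact one_ne_zero h10
      · -- e = 𝟙 : ψ is an iso, contradicting U ≇ U⟦1⟧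
        have he1 : e = 𝟙 _ := by
          rw [← hmape]
          show E.inverse.map e₀ = 𝟙 _
          have h1' : e₀ = 𝟙 U := h1
          rw [h1', CategoryTheory.Functor.map_id]
        have : IsIso ψ := ⟨r, hr, by rw [← hedef, he1]⟩
        have iso2 : U⟦(1 : ℤ)⟧ ≅ U :=
          E.functor.mapIso (asIso ψ) ≪≫ E.counitIso.app U
        exact hshift ⟨iso2.symm⟩
    obtain ⟨t, ht⟩ := hlas _ ψ hψ
    have hcomp : h ≫ E.functor.map ψ = 0 := by
      rw [← ht, Functor.map_comp]
      refine (Category.assoc _ _ _).symm.trans ?_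
      have h31 : h ≫ E.functor.map u = 0 := comp_distTriang_mor_zero₃₁ _ hdist
      rw [h31, zero_comp]
    rw [← hg]
    refine (Category.assoc _ _ _).symm.trans ?_
    rw [hcomp, zero_comp]
  -- the two precomposition linear maps
  set L1 : (V ⟶ U) →ₗ[k] (U ⟶ U) := Linear.leftComp k U u with hL1
  set L2 : (W ⟶ U) →ₗ[k] (V ⟶ U) := Linear.leftComp k U v with hL2
  -- u is not a split mono (else h = 0)
  have husm : ¬ IsSplitMono u := by
    intro hsm
    have : Mono u := inferInstance
    exact hne (Triangle.mor₃_eq_zero_of_mono₁ _ hdist this)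
  -- range L1 = R
  have hrange1 : LinearMap.range L1 = R := by
    ext f
    rw [hmemR]
    constructor
    · rintro ⟨t, rfl⟩
      intro hiso
      have : IsSplitMono u := ⟨⟨t ≫ inv (L1 t), by
        show u ≫ t ≫ inv (L1 t) = 𝟙 U
        have : L1 t = u ≫ t := rfl
        rw [← assoc, ← this, IsIso.hom_inv_id]⟩⟩
      exact husm this
    · intro hf
      have hfsm : ¬ IsSplitMono f := fun hsm =>
        hf (aux_isIso_of_isSplitMono hUloc f hsm)
      obtain ⟨t, ht⟩ := hlas _ f hfsm
      exact ⟨t, ht⟩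
  -- L2 injective
  have hinj2 : Function.Injective L2 := by
    rw [← LinearMap.ker_eq_bot]
    ext f
    simp only [LinearMap.mem_ker, Submodule.mem_bot]
    constructor
    · intro hf
      have hvf : v ≫ f = 0 := hf
      obtain ⟨g, hg⟩ := Triangle.yoneda_exact₃ _ hdist f hvf
      rw [hg]
      exact keyA g
    · intro hf
      rw [hf, map_zero]
  -- ker L1 = range L2
  have hker1 : LinearMap.ker L1 = LinearMap.range L2 := by
    ext f
    simp only [LinearMap.mem_ker, LinearMap.mem_range]
    constructor
    · intro hf
      have huf : u ≫ f = 0 := hf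
      obtain ⟨g, hg⟩ := Triangle.yoneda_exact₂ _ hdist f huf
      exact ⟨g, hg.symm⟩
    · rintro ⟨g, rfl⟩
      show u ≫ v ≫ g = 0
      have h12 : u ≫ v = 0 := comp_distTriang_mor_zero₁₂ _ hdist
      rw [← assoc, h12, zero_comp]
  -- now count dimensions
  have e1 : Module.finrank k (W ⟶ U) = Module.finrank k (LinearMap.range L2) :=
    (LinearMap.finrank_range_of_inj hinj2).symm
  have e2 : Module.finrank k (LinearMap.range L1) + Module.finrank k (LinearMap.ker L1)
      = Module.finrank k (V ⟶ U) := LinearMap.finrank_range_add_finrank_ker L1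
  have e3 : Module.finrank k ((U ⟶ U) ⧸ R) + Module.finrank k R
      = Module.finrank k (U ⟶ U) := Submodule.finrank_quotient_add_finrank R
  rw [hrange1] at e2
  rw [hker1] at e2
  omega
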